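/- arXiv:1303.1854 — 2 statements merged into one kernel-verified Lean document; each statement's English description precedes it below -/
import Mathlib

section
/- If x_1 ≤ x_2 ≤ … ≤ x_N are real numbers in [0,1], then their star-discrepancy equals D_N* = 1/(2N) + max_{i=1,…,N} |x_i − (2i−1)/(2N)|. -/
open scoped Classical

/-- If `x 0 ≤ x 1 ≤ … ≤ x (N-1)` are reals in `[0,1]`, then their
star-discrepancy is `D_N* = 1/(2N) + max_{i=1,…,N} |x_i − (2i−1)/(2N)|`
(here the `i`-th point, `1 ≤ i ≤ N`, corresponds to the index `i-1 : Fin N`,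
so `2i − 1 = 2(i-1) + 1`). -/
theorem star_discrepancy_of_sorted
    (N : ℕ) (hN : 0 < N) (x : Fin N → ℝ)
    (hx : ∀ j, x j ∈ Set.Icc (0 : ℝ) 1) (hmono : Monotone x) :
    sSup {t : ℝ | ∃ a : ℝ, 0 < a ∧ a ≤ 1 ∧
        t = |((Finset.univ.filter (fun j => x j ∈ Set.Ico 0 a)).card : ℝ) / (N : ℝ) - a|}
      = 1 / (2 * N)
        + (Finset.univ.sup' (Finset.univ_nonempty_iff.mpr ⟨⟨0, hN⟩⟩)
            fun i : Fin N => |x i - (2 * (i : ℝ) + 1) / (2 * N)|) := by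
  have hN' : (0:ℝ) < N := Nat.cast_pos.mpr hN
  have hne : (Finset.univ : Finset (Fin N)).Nonempty := Finset.univ_nonempty_iff.mpr ⟨⟨0, hN⟩⟩
  set F : ℝ → Finset (Fin N) := fun a => Finset.univ.filter (fun j => x j ∈ Set.Ico 0 a) with hF
  set S : Set ℝ := {t : ℝ | ∃ a : ℝ, 0 < a ∧ a ≤ 1 ∧
      t = |((F a).card : ℝ) / (N : ℝ) - a|} with hSdef
  set D : ℝ := 1 / (2 * (N:ℝ)) + (Finset.univ.sup' hne
      fun i : Fin N => |x i - (2 * (i : ℝ) + 1) / (2 * N)|) with hDdef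
  have mem_F : ∀ (a : ℝ) (j : Fin N), j ∈ F a ↔ x j < a := by
    intro a j
    simp [hF, Set.mem_Ico, (hx j).1]
  -- key max identity
  have key : ∀ i : Fin N, 1/(2*(N:ℝ)) + |x i - (2*(i:ℝ)+1)/(2*(N:ℝ))|
      = max (((i:ℝ)+1)/N - x i) (x i - (i:ℝ)/N) := by
    intro i
    have h1 : (2*(i:ℝ)+1)/(2*(N:ℝ)) = (i:ℝ)/N + 1/(2*N) := by field_simp
    have h2 : ((i:ℝ)+1)/(N:ℝ) = (i:ℝ)/N + 1/N := by ring
    have h3 : (1:ℝ)/N = 2 * (1/(2*(N:ℝ))) := by field_simp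
    rcases abs_cases (x i - (2*(i:ℝ)+1)/(2*(N:ℝ))) with ⟨he, hs⟩ | ⟨he, hs⟩ <;>
      rcases max_cases (((i:ℝ)+1)/N - x i) (x i - (i:ℝ)/N) with ⟨hm, hm'⟩ | ⟨hm, hm'⟩ <;>
      rw [he, hm] <;> linarith
  have hterm : ∀ i : Fin N, 1/(2*(N:ℝ)) + |x i - (2*(i:ℝ)+1)/(2*(N:ℝ))| ≤ D := by
    intro i
    rw [hDdef]
    have := Finset.le_sup' (fun i : Fin N => |x i - (2 * (i : ℝ) + 1) / (2 * N)|)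
      (Finset.mem_univ i)
    linarith
  have habs : 0 ≤ Finset.univ.sup' hne fun i : Fin N => |x i - (2 * (i : ℝ) + 1) / (2 * N)| :=
    le_trans (abs_nonneg _) (Finset.le_sup' (fun i : Fin N => |x i - (2 * (i : ℝ) + 1) / (2 * N)|) (Finset.mem_univ (⟨0, hN⟩ : Fin N)))
  have hD0 : 0 ≤ D := by
    rw [hDdef]
    have h1 : 0 < 1/(2*(N:ℝ)) := by positivity
    linarith
  -- upper bound: every element of S is ≤ D
  have hub : ∀ t ∈ S, t ≤ D := by
    rintro t ⟨a, ha0, ha1, rfl⟩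
    set k := (F a).card with hk
    have hkN : k ≤ N := by
      calc k ≤ (Finset.univ : Finset (Fin N)).card := Finset.card_filter_le _ _
        _ = N := by simp
    rcases abs_cases ((k:ℝ)/N - a) with ⟨he, hs⟩ | ⟨he, hs⟩
    · -- t = k/N - a, need k ≥ 1
      have hk1 : k ≠ 0 := by
        intro h
        rw [h] at hs
        simp at hs
        linarith
      obtain ⟨m, hm⟩ : ∃ m, k = m + 1 := ⟨k - 1, (Nat.succ_pred_eq_of_pos (Nat.pos_of_ne_zero hk1)).symm⟩
      have hmN : m < N := by omega
      set i : Fin N := ⟨m, hmN⟩ with hi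
      have hxm : x i < a := by
        by_contra h
        push_neg at h
        have hsub : F a ⊆ Finset.Iio i := by
          intro j hj
          rw [Finset.mem_Iio]
          by_contra hji
          push_neg at hji
          exact absurd ((mem_F a j).mp hj) (not_lt.mpr (h.trans (hmono hji)))
        have hle : (F a).card ≤ m := (Finset.card_le_card hsub).trans_eq (Fin.card_Iio i)
        omega
      have hcast : (k:ℝ) = (m:ℝ) + 1 := by rw [hm]; push_cast; ring
      have h4 : ((i:ℝ)+1)/N - x i ≤ D := le_trans (le_max_left _ _) ((key i).symm.le.trans (hterm i))
      have hicast : ((i:ℝ)) = (m:ℝ) := rfl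
      rw [he]
      rw [hicast] at h4
      have : (k:ℝ)/N - a ≤ ((m:ℝ)+1)/N - x i := by
        rw [hcast]
        linarith
      linarith
    · -- t = a - k/N
      rcases lt_or_eq_of_le hkN with hklt | hkeq
      · set i : Fin N := ⟨k, hklt⟩ with hi
        have hxk : a ≤ x i := by
          by_contra h
          push_neg at h
          have hsub : Finset.Iic i ⊆ F a := by
            intro j hj
            exact (mem_F a j).mpr (lt_of_le_of_lt (hmono (Finset.mem_Iic.mp hj)) h)
          have hge : k + 1 ≤ (F a).card := by
            have h' := Finset.card_le_card hsub
            rw [Fin.card_Iic] at h'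
            exact h'
          omega
        have h4 : x i - (i:ℝ)/N ≤ D := le_trans (le_max_right _ _) ((key i).symm.le.trans (hterm i))
        have hicast : ((i:ℝ)) = (k:ℝ) := rfl
        rw [hicast] at h4
        rw [he]
        linarith
      · rw [he, hkeq]
        have : (N:ℝ)/N = 1 := div_self (ne_of_gt hN')
        rw [this]
        linarith
  have hSne : S.Nonempty := ⟨_, 1, one_pos, le_refl 1, rfl⟩
  have hbdd : BddAbove S := ⟨D, hub⟩
  have hsup0 : 0 ≤ sSup S := by
    have hmem : |((F 1).card : ℝ)/(N:ℝ) - 1| ∈ S := ⟨1, one_pos, le_refl 1, rfl⟩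
    exact le_trans (abs_nonneg _) (le_csSup hbdd hmem)
  -- lower bound: D ≤ sSup S via each i
  have hlow : ∀ i : Fin N, 1/(2*(N:ℝ)) + |x i - (2*(i:ℝ)+1)/(2*(N:ℝ))| ≤ sSup S := by
    intro i
    rw [key i]
    apply max_le
    · -- (i+1)/N - x i ≤ sSup S
      by_cases h1 : x i < 1
      · refine le_of_forall_sub_le fun ε hε => ?_
        set a : ℝ := min (x i + ε) 1 with ha
        have ha0 : 0 < a := lt_min (by linarith [(hx i).1]) one_pos
        have ha1 : a ≤ 1 := min_le_right _ _
        have hxa : x i < a := lt_min (by linarith) h1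
        have hsub : Finset.Iic i ⊆ F a := by
          intro j hj
          exact (mem_F a j).mpr (lt_of_le_of_lt (hmono (Finset.mem_Iic.mp hj)) hxa)
        have hcard : (i:ℕ) + 1 ≤ (F a).card := by
          rw [← Fin.card_Iic i]; exact Finset.card_le_card hsub
        have hcard' : (i:ℝ) + 1 ≤ ((F a).card : ℝ) := by exact_mod_cast hcard
        have haxe : a ≤ x i + ε := min_le_left _ _
        have hstep : ((i:ℝ)+1)/N - x i - ε ≤ |((F a).card : ℝ)/N - a| := by
          refine le_trans ?_ (le_abs_self _)
          have : ((i:ℝ)+1)/N ≤ ((F a).card : ℝ)/N := by gcongr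
          linarith
        exact hstep.trans (le_csSup hbdd ⟨a, ha0, ha1, rfl⟩)
      · push_neg at h1
        have hile : ((i:ℝ)+1)/N ≤ 1 := by
          rw [div_le_one hN']
          exact_mod_cast i.2
        linarith
    · -- x i - i/N ≤ sSup S
      by_cases h0 : (i:ℝ)/N < x i
      · set a : ℝ := x i with ha
        have ha0 : 0 < a := lt_of_le_of_lt (by positivity) h0
        have ha1 : a ≤ 1 := (hx i).2
        have hsub : F a ⊆ Finset.Iio i := by
          intro j hj
          rw [Finset.mem_Iio]
          by_contra hji
          push_neg at hji
          exact absurd ((mem_F a j).mp hj) (not_lt.mpr (hmono hji))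
        have hcard : (F a).card ≤ (i:ℕ) := (Finset.card_le_card hsub).trans_eq (Fin.card_Iio i)
        have hcard' : ((F a).card : ℝ) ≤ (i:ℝ) := by exact_mod_cast hcard
        have hstep : x i - (i:ℝ)/N ≤ |((F a).card : ℝ)/N - a| := by
          rw [abs_sub_comm]
          refine le_trans ?_ (le_abs_self _)
          have : ((F a).card : ℝ)/N ≤ (i:ℝ)/N := by gcongr
          linarith
        exact hstep.trans (le_csSup hbdd ⟨a, ha0, ha1, rfl⟩)
      · push_neg at h0
        linarith
  refine le_antisymm (csSup_le hSne hub) ?_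
  have hsle : (Finset.univ.sup' hne fun i : Fin N => |x i - (2 * (i : ℝ) + 1) / (2 * N)|)
      ≤ sSup S - 1/(2*(N:ℝ)) :=
    Finset.sup'_le _ _ (fun i _ => by linarith [hlow i])
  rw [hDdef]
  linarith [hsle]
end

section
/- Let ν ∈ S^{n−1} be an irrational direction (ν ∉ ℝℤⁿ), and H(x_0) = {x ∈ ℝⁿ : (x − x_0)·ν = 0}. Then for any δ > 0 there exists z ∈ ℤⁿ with dist(z, H(x_0)) ≤ δ; that is, the integer lattice comes arbitrarily close to every hyperplane with irrational normal. -/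
/-- If `ν ∈ S^{n-1}` is an irrational direction (no nonzero scalar multiple of
`ν` lies in `ℤⁿ`), then for any hyperplane `H(x₀) = {x : (x−x₀)·ν = 0}` and any
`δ > 0` there is a lattice point `z ∈ ℤⁿ` with `dist(z, H(x₀)) = |(z−x₀)·ν| ≤ δ`. -/
theorem lattice_points_near_irrational_hyperplane
    (n : ℕ) (ν : Fin n → ℝ) (hν : ∑ i, ν i ^ 2 = 1)
    (hirr : ¬ ∃ t : ℝ, t ≠ 0 ∧ ∀ i, ∃ z : ℤ, t * ν i = (z : ℝ))
    (x₀ : Fin n → ℝ) (δ : ℝ) (hδ : 0 < δ) :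
    ∃ z : Fin n → ℤ, |∑ i, ((z i : ℝ) - x₀ i) * ν i| ≤ δ := by
  set f : (Fin n → ℤ) → ℝ := fun z => ∑ i, (z i : ℝ) * ν i with hf
  set S : AddSubgroup ℝ :=
    { carrier := Set.range f
      zero_mem' := ⟨0, by simp [hf]⟩
      add_mem' := by
        rintro _ _ ⟨a, rfl⟩ ⟨b, rfl⟩
        exact ⟨a + b, by simp [hf, add_mul, Finset.sum_add_distrib]⟩
      neg_mem' := by
        rintro _ ⟨a, rfl⟩
        exact ⟨-a, by simp [hf, ← Finset.sum_neg_distrib]⟩ } with hS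
  have hnu : ∀ i, ν i ∈ S := by
    intro i
    refine ⟨Pi.single i 1, ?_⟩
    simp [hf, Pi.single_apply, Finset.sum_ite_eq']
  rcases S.dense_or_cyclic with hdense | ⟨a, ha⟩
  · set c : ℝ := ∑ i, x₀ i * ν i with hc
    have := Metric.dense_iff.mp hdense c δ hδ
    rcases this with ⟨g, hg1, z, hz⟩
    refine ⟨z, ?_⟩
    have : ∑ i, ((z i : ℝ) - x₀ i) * ν i = f z - c := by
      simp [hf, hc, sub_mul, Finset.sum_sub_distrib]
    rw [this, hz]
    rw [Metric.mem_ball, Real.dist_eq] at hg1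
    exact hg1.le
  · exfalso
    have hmem : ∀ i, ∃ m : ℤ, ν i = m * a := by
      intro i
      have := hnu i
      rw [ha, AddSubgroup.mem_closure_singleton] at this
      rcases this with ⟨m, hm⟩
      exact ⟨m, by rw [← hm]; simp [zsmul_eq_mul]⟩
    by_cases h0 : a = 0
    · have : ∀ i, ν i = 0 := by
        intro i; rcases hmem i with ⟨m, hm⟩; simp [hm, h0]
      simp [this] at hν
    · refine hirr ⟨1 / a, one_div_ne_zero h0, fun i => ?_⟩
      rcases hmem i with ⟨m, hm⟩
      exact ⟨m, by field_simp [hm]; rw [hm]; ring⟩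
end
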